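/- Let d < 0 be squarefree, β = -1/2 + t√d with t ∈ ℝ, and φ the Hermitian form with matrix [[1,β],[β̄,1]]. If φ is positive definite and a = a₁+a₂√d, b = b₁+b₂√d ∈ ℚ(√d) satisfy a₁b₂ ≠ a₂b₁ and φ(a,b) = 1, then -d·(1 - a₁² + a₂²d + a₁b₁ - a₂db₂ - b₁² + b₂²d)² / (2d·a₁b₂ - 2d·a₂b₁)² < 3/4. -/

import Mathlib

noncomputable def sqrtd (d : ℤ) : ℂ := Complex.I * Real.sqrt (-d)

noncomputable def phi (a c : ℚ) (b : ℂ) (x y : ℂ) : ℂ :=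
  a * x * (starRingEnd ℂ) x + b * x * (starRingEnd ℂ) y
    + (starRingEnd ℂ) b * (starRingEnd ℂ) x * y + c * y * (starRingEnd ℂ) y

theorem stmt7 (d : ℤ) (hd : d < 0) (hsf : Squarefree d) (t : ℝ)
    (hpos : ∀ x y : ℂ, ¬(x = 0 ∧ y = 0) →
      0 < (phi 1 1 (-(1/2) + (t : ℂ) * sqrtd d) x y).re)
    (a₁ a₂ b₁ b₂ : ℚ) (hab : a₁ * b₂ ≠ a₂ * b₁)
    (hmin : phi 1 1 (-(1/2) + (t : ℂ) * sqrtd d)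
      ((a₁ : ℂ) + (a₂ : ℂ) * sqrtd d) ((b₁ : ℂ) + (b₂ : ℂ) * sqrtd d) = 1) :
    -((d : ℚ) * (1 - a₁^2 + a₂^2*(d : ℚ) + a₁*b₁ - a₂*(d : ℚ)*b₂ - b₁^2 + b₂^2*(d : ℚ))^2) /
      (2*(d : ℚ)*a₁*b₂ - 2*(d : ℚ)*a₂*b₁)^2 < 3/4 := by
  set s : ℝ := Real.sqrt (-d) with hs
  have hs2 : s^2 = -d := Real.sq_sqrt (by exact_mod_cast neg_nonneg.mpr hd.le)
  -- step 1
  have h1 := hpos 1 (-(-(1/2) + (t : ℂ) * sqrtd d)) (by simp)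
  simp only [phi, sqrtd] at h1
  simp [Complex.ext_iff, Complex.add_re, Complex.mul_re, Complex.mul_im] at h1
  rw [show Real.sqrt (-(d:ℝ)) = s from rfl] at h1
  have ht : -(d:ℝ)*t^2 < 3/4 := by nlinarith [h1, hs2]
  -- step 2
  simp only [phi, sqrtd] at hmin
  simp [Complex.ext_iff, Complex.add_re, Complex.mul_re, Complex.mul_im] at hmin
  have hm := hmin.1
  rw [show Real.sqrt (-(d:ℝ)) = s from rfl] at hm
  have hdq : (d:ℚ) ≠ 0 := by exact_mod_cast hd.ne
  have hD : (2*(d:ℚ)*a₁*b₂ - 2*(d:ℚ)*a₂*b₁) ≠ 0 := by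
    intro h
    apply hab
    have : (2*(d:ℚ)) * (a₁*b₂ - a₂*b₁) = 0 := by linarith
    rcases mul_eq_zero.mp this with h' | h'
    · simp [hdq] at h'
    · linarith
  have key : ((1 - a₁^2 + a₂^2*(d:ℚ) + a₁*b₁ - a₂*(d:ℚ)*b₂ - b₁^2 + b₂^2*(d:ℚ) : ℚ) : ℝ)
      = -(((2*(d:ℚ)*a₁*b₂ - 2*(d:ℚ)*a₂*b₁ : ℚ)) : ℝ) * t := by
    push_cast
    linear_combination -hm + ((a₂:ℝ)^2 - 2*t*(a₂:ℝ)*b₁ - (a₂:ℝ)*b₂ + 2*t*(a₁:ℝ)*b₂ + (b₂:ℝ)^2) * hs2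
  have heq : ((-((d:ℚ) * (1 - a₁^2 + a₂^2*(d:ℚ) + a₁*b₁ - a₂*(d:ℚ)*b₂ - b₁^2 + b₂^2*(d:ℚ))^2) /
      (2*(d:ℚ)*a₁*b₂ - 2*(d:ℚ)*a₂*b₁)^2 : ℚ) : ℝ) = -(d:ℝ)*t^2 := by
    push_cast
    push_cast at key
    rw [key]
    have hDr : ((2:ℝ)*(d:ℝ)*a₁*b₂ - 2*(d:ℝ)*a₂*b₁) ≠ 0 := by exact_mod_cast hD
    have hDr' : ((a₁:ℝ)*b₂ - a₂*b₁) ≠ 0 := fun h => hDr (by linear_combination (2*(d:ℝ)) * h)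
    field_simp
  have : ((-((d:ℚ) * (1 - a₁^2 + a₂^2*(d:ℚ) + a₁*b₁ - a₂*(d:ℚ)*b₂ - b₁^2 + b₂^2*(d:ℚ))^2) /
      (2*(d:ℚ)*a₁*b₂ - 2*(d:ℚ)*a₂*b₁)^2 : ℚ) : ℝ) < ((3/4 : ℚ) : ℝ) := by
    rw [heq]; push_cast; linarith
  exact_mod_cast this
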